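/- arXiv:2012.08841 — 3 statements merged into one kernel-verified Lean document; each statement's English description precedes it below -/
import Mathlib

section
/- Let (X,d,mu) be a path-metric measure space satisfying the R-doubling property, and let 0 < r <= R. Then there are constants C, D > 0 depending only on the doubling constant such that for all x, y in X, mu(B(x,r)) <= C * exp(D * d(x,y) / r) * mu(B(y,r)). -/
open MeasureTheory Metric Set

/-- A path-metric (length) space: the distance is the infimum of lengths of
paths, which implies the existence of approximate intermediate points. -/
def IsLengthSpace (X : Type*) [MetricSpace X] : Prop :=
  ∀ x y : X, ∀ t ∈ Set.Icc (0:ℝ) (dist x y), ∀ ε > (0:ℝ),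
    ∃ z : X, dist x z ≤ t + ε ∧ dist z y ≤ dist x y - t + ε

theorem stmt6 {X : Type*} [MetricSpace X] [MeasurableSpace X] (μ : Measure X)
    (hlen : IsLengthSpace X)
    (hpos : ∀ (x : X) (r : ℝ), 0 < r → 0 < μ (ball x r))
    (hfin : ∀ (x : X) (r : ℝ), μ (ball x r) < ⊤)
    (A R : ℝ) (hA : 1 < A) (hR : 0 < R)
    (hdoub : ∀ (x : X) (r : ℝ), 0 < r → r ≤ R →
      (μ (ball x (2 * r))).toReal ≤ A * (μ (ball x r)).toReal)
    (r : ℝ) (hr : 0 < r) (hrR : r ≤ R) :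
    ∃ C > (0:ℝ), ∃ D > (0:ℝ), ∀ x y : X,
      (μ (ball x r)).toReal ≤
        C * Real.exp (D * dist x y / r) * (μ (ball y r)).toReal := by
  have hA0 : (0:ℝ) < A := lt_trans one_pos hA
  -- base step: if dist x y < r then μ(B(x,r)) ≤ A μ(B(y,r))
  have base : ∀ x y : X, dist x y < r →
      (μ (ball x r)).toReal ≤ A * (μ (ball y r)).toReal := by
    intro x y hxy
    have hsub : ball x r ⊆ ball y (2 * r) := by
      intro z hz
      simp only [mem_ball] at hz ⊢
      have := dist_triangle z x y
      linarith
    have h1 : (μ (ball x r)).toReal ≤ (μ (ball y (2 * r))).toReal :=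
      ENNReal.toReal_mono (hfin y (2*r)).ne (measure_mono hsub)
    exact h1.trans (hdoub y r hr hrR)
  -- chain step
  have key : ∀ n : ℕ, ∀ x y : X, dist x y < (n + 1) * r →
      (μ (ball x r)).toReal ≤ A ^ (n + 1) * (μ (ball y r)).toReal := by
    intro n
    induction n with
    | zero =>
      intro x y hxy
      simpa using base x y (by simpa using hxy)
    | succ n ih =>
      intro x y hxy
      by_cases hc : dist x y < r
      · have h1 := base x y hc
        have hμ : 0 ≤ (μ (ball y r)).toReal := ENNReal.toReal_nonneg
        have hAle : A ≤ A ^ (n + 1 + 1) := by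
          calc A = A ^ 1 := (pow_one A).symm
          _ ≤ A ^ (n + 1 + 1) := pow_le_pow_right₀ hA.le (by omega)
        nlinarith
      · push_neg at hc
        set δ : ℝ := ((n + 2) * r - dist x y) / 3 with hδdef
        have hδ : 0 < δ := by
          have h2 : dist x y < (n + 2) * r := by push_cast at hxy ⊢; linarith
          simp only [hδdef]
          linarith
        set ε : ℝ := min (r / 4) (δ / 2) with hεdef
        have hε : 0 < ε := lt_min (by linarith) (by linarith)
        have hεr : ε ≤ r / 4 := min_le_left _ _
        have hεδ : ε < δ := lt_of_le_of_lt (min_le_right _ _) (by linarith)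
        have ht : r - 2 * ε ∈ Set.Icc (0:ℝ) (dist x y) :=
          ⟨by linarith, by linarith⟩
        obtain ⟨z, hz1, hz2⟩ := hlen x y (r - 2 * ε) ht ε hε
        have hz1' : dist x z < r := by linarith
        have hz2' : dist z y < (n + 1) * r := by
          have h3 : dist z y ≤ dist x y - r + 3 * ε := by linarith
          have heq : dist x y - r + 3 * δ = (n + 1) * r := by
            field_simp [hδdef]; ring
          linarith
        have h1 := base x z hz1'
        have h2 := ih z y hz2'
        have hApos : (0:ℝ) < A ^ (n + 1) := pow_pos hA0 _
        calc (μ (ball x r)).toReal ≤ A * (μ (ball z r)).toReal := h1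
          _ ≤ A * (A ^ (n + 1) * (μ (ball y r)).toReal) := by nlinarith
          _ = A ^ (n + 1 + 1) * (μ (ball y r)).toReal := by ring
  refine ⟨A, hA0, Real.log A, Real.log_pos hA, fun x y => ?_⟩
  set n : ℕ := ⌊dist x y / r⌋₊ with hn
  have hd0 : 0 ≤ dist x y / r := div_nonneg dist_nonneg hr.le
  have hfl : dist x y / r < n + 1 := Nat.lt_floor_add_one _
  have hxy : dist x y < (n + 1) * r := by
    have := (div_lt_iff₀ hr).mp hfl
    linarith
  have h1 := key n x y hxy
  have hAn : A ^ (n + 1) ≤ A * Real.exp (Real.log A * dist x y / r) := by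
    have hexp : A ^ n = Real.exp (n * Real.log A) := by
      rw [← Real.log_pow, Real.exp_log (pow_pos hA0 n)]
    have hnle : (n : ℝ) ≤ dist x y / r := Nat.floor_le hd0
    have hmono : Real.exp ((n : ℝ) * Real.log A) ≤
        Real.exp (Real.log A * dist x y / r) := by
      apply Real.exp_le_exp.mpr
      rw [mul_comm, mul_div_assoc]
      exact mul_le_mul_of_nonneg_left hnle (Real.log_pos hA).le
    calc A ^ (n + 1) = A * A ^ n := by ring
      _ ≤ A * Real.exp (Real.log A * dist x y / r) := by
          rw [hexp]; exact mul_le_mul_of_nonneg_left hmono hA0.le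
  have hμ : 0 ≤ (μ (ball y r)).toReal := ENNReal.toReal_nonneg
  calc (μ (ball x r)).toReal ≤ A ^ (n + 1) * (μ (ball y r)).toReal := h1
    _ ≤ A * Real.exp (Real.log A * dist x y / r) * (μ (ball y r)).toReal :=
        mul_le_mul_of_nonneg_right hAn hμ
end

section
/- Let (X,d,mu) satisfy the doubling property of order eta (at all scales) and the reverse doubling property of order nu with nu > s > 0. Let d = d(x,y) > 0 and c > 4. Then the integral over t in (0, infinity) of t^{s/2 - 1} * exp(-d^2/(c*t)) / mu(B(x, sqrt(t))) dt is at most C * d^s / mu(B(x,d)), where C depends only on s, c, eta, nu and the doubling and reverse doubling constants. -/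
open MeasureTheory Metric Set ENNReal NNReal

lemma aux_exp (n : ℕ) (hn : 0 < n) (x : ℝ) (hx : 0 < x) :
    Real.exp (-x) ≤ (n:ℝ)^n / x^n := by
  have hn' : (0:ℝ) < n := by exact_mod_cast hn
  have h1 : x / n ≤ Real.exp (x / n) := by
    have := Real.add_one_le_exp (x / n)
    linarith
  have h2 : (x / n)^n ≤ Real.exp x := by
    calc (x / n)^n ≤ (Real.exp (x / n))^n :=
          pow_le_pow_left₀ (by positivity) h1 n
    _ = Real.exp ((x / n) * n) := by rw [← Real.exp_nat_mul]; ring_nf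
    _ = Real.exp x := by rw [div_mul_cancel₀]; exact hn'.ne'
  have hpow : (0:ℝ) < (x / n)^n := by positivity
  have h3 : Real.exp (-x) ≤ ((x / n)^n)⁻¹ := by
    rw [Real.exp_neg]
    exact inv_anti₀ hpow h2
  calc Real.exp (-x) ≤ ((x / n)^n)⁻¹ := h3
  _ = (n:ℝ)^n / x^n := by
      rw [div_pow, inv_div]

lemma aux_div (V Vt : ℝ≥0∞) (hV0 : V ≠ 0) (hVtop : V ≠ ⊤) (hVt0 : Vt ≠ 0)
    (hVttop : Vt ≠ ⊤) (B F : ℝ) (hB : 0 ≤ B) (hF : 0 ≤ F)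
    (h : V.toReal ≤ B * Vt.toReal) :
    ENNReal.ofReal F / Vt ≤ ENNReal.ofReal (F * B) / V := by
  have hVB : V ≤ ENNReal.ofReal B * Vt := by
    calc V = ENNReal.ofReal V.toReal := (ENNReal.ofReal_toReal hVtop).symm
    _ ≤ ENNReal.ofReal (B * Vt.toReal) := ENNReal.ofReal_le_ofReal h
    _ = ENNReal.ofReal B * Vt := by
        rw [ENNReal.ofReal_mul hB, ENNReal.ofReal_toReal hVttop]
  have key : Vt⁻¹ ≤ ENNReal.ofReal B / V := by
    rw [ENNReal.le_div_iff_mul_le (Or.inl hV0) (Or.inl hVtop)]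
    calc Vt⁻¹ * V = V / Vt := by rw [mul_comm, div_eq_mul_inv]
    _ ≤ ENNReal.ofReal B := by
        rw [ENNReal.div_le_iff_le_mul (Or.inl hVt0) (Or.inl hVttop)]
        exact hVB
  calc ENNReal.ofReal F / Vt = ENNReal.ofReal F * Vt⁻¹ := by rw [div_eq_mul_inv]
  _ ≤ ENNReal.ofReal F * (ENNReal.ofReal B / V) := mul_le_mul_right key _
  _ = ENNReal.ofReal (F * B) / V := by
      rw [ENNReal.ofReal_mul hF, mul_div_assoc]

theorem stmt15 {X : Type*} [MetricSpace X] [MeasurableSpace X] (μ : Measure X)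
    (hpos : ∀ (x : X) (r : ℝ), 0 < r → 0 < μ (ball x r))
    (hfin : ∀ (x : X) (r : ℝ), μ (ball x r) < ⊤)
    (A η a ν s c : ℝ) (hA : 1 < A) (ha : 0 < a) (hs : 0 < s) (hsν : s < ν) (hc : 4 < c)
    (hdoub : ∀ (x : X) (r r' : ℝ), 0 < r → r ≤ r' →
      (μ (ball x r')).toReal ≤ A * (r' / r) ^ η * (μ (ball x r)).toReal)
    (hrd : ∀ (x : X) (r r' : ℝ), 0 < r → r ≤ r' →
      a * (r' / r) ^ ν ≤ (μ (ball x r')).toReal / (μ (ball x r)).toReal) :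
    ∃ C > (0:ℝ), ∀ x y : X, x ≠ y →
      (∫⁻ t in Set.Ioi (0:ℝ),
          ENNReal.ofReal (t ^ (s / 2 - 1) * Real.exp (-(dist x y) ^ 2 / (c * t))) /
            μ (ball x (Real.sqrt t))) ≤
        ENNReal.ofReal (C * dist x y ^ s) / μ (ball x (dist x y)) := by
  have hA0 : (0:ℝ) < A := by linarith
  have hc0 : (0:ℝ) < c := by linarith
  obtain ⟨k, hk⟩ := exists_nat_gt ((η - s)/2)
  set n : ℕ := k + 1 with hn_def
  have hn0 : 0 < n := Nat.succ_pos k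
  have hnR : (η - s)/2 < (n:ℝ) := by
    have : (k:ℝ) ≤ (n:ℝ) := by exact_mod_cast Nat.le_succ k
    linarith
  set p : ℝ := s/2 + (n:ℝ) - η/2 with hp_def
  have hp : 0 < p := by rw [hp_def]; linarith
  set q : ℝ := (ν - s)/2 with hq_def
  have hq : 0 < q := by rw [hq_def]; linarith
  have hnn0 : (0:ℝ) < (n:ℝ)^n := by positivity
  have hC₁ : 0 < A * (n:ℝ)^n * c^n / p :=
    div_pos (mul_pos (mul_pos hA0 hnn0) (by positivity)) hp
  have hC₂ : (0:ℝ) < 1 / (a * q) := by positivity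
  refine ⟨A * (n:ℝ)^n * c^n / p + 1 / (a * q), by linarith, ?_⟩
  intro x y hxy
  set d := dist x y with hd_def
  have hd : 0 < d := dist_pos.mpr hxy
  set T : ℝ := d^2 with hT_def
  have hT : 0 < T := by positivity
  set V := μ (ball x d) with hV_def
  have hV0 : V ≠ 0 := (hpos x d hd).ne'
  have hVtop : V ≠ ⊤ := (hfin x d).ne
  -- pointwise bound on Ioc 0 T
  have step1 : ∀ t ∈ Ioc (0:ℝ) T,
      ENNReal.ofReal (t ^ (s / 2 - 1) * Real.exp (-d ^ 2 / (c * t))) /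
          μ (ball x (Real.sqrt t)) ≤
        ENNReal.ofReal ((A * (n:ℝ)^n * c^n * d^(η - 2*(n:ℝ))) * t^(p-1)) / V := by
    rintro t ⟨ht, htT⟩
    have hst : 0 < Real.sqrt t := Real.sqrt_pos.mpr ht
    have hstd : Real.sqrt t ≤ d := by
      rw [show d = Real.sqrt T by rw [hT_def, Real.sqrt_sq hd.le]]
      exact Real.sqrt_le_sqrt htT
    have hdb := hdoub x (Real.sqrt t) d hst hstd
    have hBnn : 0 ≤ A * (d / Real.sqrt t) ^ η := by positivity
    have hFnn : 0 ≤ t ^ (s / 2 - 1) * Real.exp (-d ^ 2 / (c * t)) := by positivity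
    refine le_trans (aux_div V (μ (ball x (Real.sqrt t))) hV0 hVtop
      (hpos x _ hst).ne' (hfin x _).ne _ _ hBnn hFnn hdb) ?_
    apply ENNReal.div_le_div_right
    apply ENNReal.ofReal_le_ofReal
    -- real inequality
    have hx : 0 < d^2/(c*t) := by positivity
    have hexp : Real.exp (-d ^ 2 / (c * t)) ≤ (n:ℝ)^n * (c^n * t^n / d^(2*n)) := by
      have h := aux_exp n hn0 (d^2/(c*t)) hx
      rw [neg_div]
      refine h.trans_eq ?_
      rw [div_pow, pow_mul]
      have h1 : ((d^2)^n : ℝ) ≠ 0 := by positivity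
      have h2 : ((c*t)^n : ℝ) ≠ 0 := by positivity
      field_simp
      ring
    have heq : t ^ (s / 2 - 1) * ((n:ℝ)^n * (c^n * t^n / d^(2*n))) *
        (A * (d / Real.sqrt t) ^ η) =
        (A * (n:ℝ)^n * c^n * d^(η - 2*(n:ℝ))) * t^(p-1) := by
      have hsq : (Real.sqrt t) ^ η = t ^ (η/2) := by
        rw [Real.sqrt_eq_rpow, ← Real.rpow_mul ht.le]
        congr 1; ring
      have htn : (t:ℝ)^n = t^((n:ℝ)) := (Real.rpow_natCast t n).symm
      have hdn : (d:ℝ)^(2*n) = d^(2*(n:ℝ)) := by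
        rw [← Real.rpow_natCast d (2*n)]
        congr 1; push_cast; ring
      have hpe : t^(p-1) = t^(s/2-1) * t^((n:ℝ)) / t^(η/2) := by
        rw [← Real.rpow_add ht, ← Real.rpow_sub ht]
        congr 1; rw [hp_def]; ring
      have hde : d^(η - 2*(n:ℝ)) = d^η / d^(2*(n:ℝ)) := Real.rpow_sub hd _ _
      rw [Real.div_rpow hd.le hst.le, hsq, htn, hdn, hpe, hde]
      have e1 : t ^ (η/2) ≠ 0 := (Real.rpow_pos_of_pos ht _).ne'
      have e3 : d ^ (2*(n:ℝ)) ≠ 0 := (Real.rpow_pos_of_pos hd _).ne'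
      field_simp
    calc t ^ (s / 2 - 1) * Real.exp (-d ^ 2 / (c * t)) * (A * (d / Real.sqrt t) ^ η)
        ≤ t ^ (s / 2 - 1) * ((n:ℝ)^n * (c^n * t^n / d^(2*n))) *
          (A * (d / Real.sqrt t) ^ η) := by
          apply mul_le_mul_of_nonneg_right _ hBnn
          exact mul_le_mul_of_nonneg_left hexp (by positivity)
    _ = (A * (n:ℝ)^n * c^n * d^(η - 2*(n:ℝ))) * t^(p-1) := heq
  -- pointwise bound on Ioi T
  have step2 : ∀ t ∈ Ioi T,
      ENNReal.ofReal (t ^ (s / 2 - 1) * Real.exp (-d ^ 2 / (c * t))) /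
          μ (ball x (Real.sqrt t)) ≤
        ENNReal.ofReal ((a⁻¹ * d^ν) * t^(-q-1)) / V := by
    intro t ht
    simp only [mem_Ioi] at ht
    have ht0 : 0 < t := lt_trans hT ht
    have hst : 0 < Real.sqrt t := Real.sqrt_pos.mpr ht0
    have hdst : d ≤ Real.sqrt t := by
      rw [show d = Real.sqrt T by rw [hT_def, Real.sqrt_sq hd.le]]
      exact Real.sqrt_le_sqrt ht.le
    have hrd' := hrd x d (Real.sqrt t) hd hdst
    set Vt := μ (ball x (Real.sqrt t)) with hVt_def
    have hVt0 : (0:ℝ) < Vt.toReal :=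
      ENNReal.toReal_pos (hpos x _ hst).ne' (hfin x _).ne
    have hVr0 : (0:ℝ) < V.toReal := ENNReal.toReal_pos hV0 hVtop
    have hBval : V.toReal ≤ (a⁻¹ * (d / Real.sqrt t) ^ ν) * Vt.toReal := by
      have hr : 0 < Real.sqrt t / d := by positivity
      have hrp : 0 < (Real.sqrt t / d) ^ ν := Real.rpow_pos_of_pos hr ν
      have h1 : V.toReal ≤ Vt.toReal / (a * (Real.sqrt t / d) ^ ν) := by
        rw [le_div_iff₀ (by positivity)]
        calc V.toReal * (a * (Real.sqrt t / d) ^ ν)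
            = a * (Real.sqrt t / d) ^ ν * V.toReal := by ring
        _ ≤ Vt.toReal := (le_div_iff₀ hVr0).mp hrd'
      have h2 : (d / Real.sqrt t) ^ ν = ((Real.sqrt t / d) ^ ν)⁻¹ := by
        rw [← Real.inv_rpow hr.le, inv_div]
      rw [h2]
      calc V.toReal ≤ Vt.toReal / (a * (Real.sqrt t / d) ^ ν) := h1
      _ = a⁻¹ * ((Real.sqrt t / d) ^ ν)⁻¹ * Vt.toReal := by
          rw [div_eq_mul_inv, mul_inv]; ring
    have hBnn : 0 ≤ a⁻¹ * (d / Real.sqrt t) ^ ν := by positivity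
    have hFnn : 0 ≤ t ^ (s / 2 - 1) * Real.exp (-d ^ 2 / (c * t)) := by positivity
    refine le_trans (aux_div V Vt hV0 hVtop (hpos x _ hst).ne' (hfin x _).ne
      _ _ hBnn hFnn hBval) ?_
    apply ENNReal.div_le_div_right
    apply ENNReal.ofReal_le_ofReal
    have hexp : Real.exp (-d ^ 2 / (c * t)) ≤ 1 := by
      apply Real.exp_le_one_iff.mpr
      rw [neg_div]
      have : 0 ≤ d^2/(c*t) := by positivity
      linarith
    have heq : t ^ (s / 2 - 1) * (a⁻¹ * (d / Real.sqrt t) ^ ν) =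
        (a⁻¹ * d^ν) * t^(-q-1) := by
      have hsq : (Real.sqrt t) ^ ν = t ^ (ν/2) := by
        rw [Real.sqrt_eq_rpow, ← Real.rpow_mul ht0.le]
        congr 1; ring
      have hqe : t^(-q-1) = t^(s/2-1) / t^(ν/2) := by
        rw [← Real.rpow_sub ht0]
        congr 1; rw [hq_def]; ring
      rw [Real.div_rpow hd.le hst.le, hsq, hqe]
      have e1 : t ^ (ν/2) ≠ 0 := (Real.rpow_pos_of_pos ht0 _).ne'
      field_simp
    calc t ^ (s / 2 - 1) * Real.exp (-d ^ 2 / (c * t)) * (a⁻¹ * (d / Real.sqrt t) ^ ν)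
        ≤ t ^ (s / 2 - 1) * 1 * (a⁻¹ * (d / Real.sqrt t) ^ ν) := by
          apply mul_le_mul_of_nonneg_right _ hBnn
          exact mul_le_mul_of_nonneg_left hexp (by positivity)
    _ = (a⁻¹ * d^ν) * t^(-q-1) := by rw [mul_one]; exact heq
  -- split the integral
  rw [show Ioi (0:ℝ) = Ioc 0 T ∪ Ioi T from (Ioc_union_Ioi_eq_Ioi hT.le).symm,
    lintegral_union measurableSet_Ioi Ioc_disjoint_Ioi_same]
  have hVinv : V⁻¹ ≠ ⊤ := ENNReal.inv_ne_top.mpr hV0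
  -- bound piece 1
  have bound1 : (∫⁻ t in Ioc (0:ℝ) T,
      ENNReal.ofReal (t ^ (s / 2 - 1) * Real.exp (-d ^ 2 / (c * t))) /
        μ (ball x (Real.sqrt t))) ≤
      ENNReal.ofReal ((A * (n:ℝ)^n * c^n / p) * d ^ s) / V := by
    have hint : IntegrableOn (fun t : ℝ => (A * (n:ℝ)^n * c^n * d^(η - 2*(n:ℝ))) * t^(p-1))
        (Ioc 0 T) := by
      rw [← intervalIntegrable_iff_integrableOn_Ioc_of_le hT.le]
      exact (intervalIntegral.intervalIntegrable_rpow' (by linarith)).const_mul _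
    have hnn : 0 ≤ᵐ[volume.restrict (Ioc (0:ℝ) T)]
        fun t : ℝ => (A * (n:ℝ)^n * c^n * d^(η - 2*(n:ℝ))) * t^(p-1) := by
      filter_upwards [ae_restrict_mem measurableSet_Ioc] with t ht
      have : 0 < d ^ (η - 2*(n:ℝ)) := Real.rpow_pos_of_pos hd _
      exact mul_nonneg (by positivity) (Real.rpow_nonneg ht.1.le _)
    have hval : (∫ t in Ioc (0:ℝ) T, (A * (n:ℝ)^n * c^n * d^(η - 2*(n:ℝ))) * t^(p-1)) =
        (A * (n:ℝ)^n * c^n / p) * d ^ s := by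
      rw [← intervalIntegral.integral_of_le hT.le, intervalIntegral.integral_const_mul,
        integral_rpow (Or.inl (by linarith : (-1:ℝ) < p - 1))]
      rw [show p - 1 + 1 = p by ring, Real.zero_rpow hp.ne', sub_zero]
      have hTp : T ^ p = d ^ (2*p) := by
        rw [hT_def, ← Real.rpow_natCast d 2, ← Real.rpow_mul hd.le]
        norm_num
      rw [hTp]
      have h3 : d ^ (η - 2*(n:ℝ)) * d ^ (2*p) = d ^ s := by
        rw [← Real.rpow_add hd]
        congr 1
        rw [hp_def]; ring
      calc A * (n:ℝ)^n * c^n * d^(η - 2*(n:ℝ)) * (d ^ (2*p) / p)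
          = A * (n:ℝ)^n * c^n * (d ^ (η - 2*(n:ℝ)) * d ^ (2*p)) / p := by ring
      _ = (A * (n:ℝ)^n * c^n / p) * d ^ s := by rw [h3]; ring
    calc (∫⁻ t in Ioc (0:ℝ) T,
        ENNReal.ofReal (t ^ (s / 2 - 1) * Real.exp (-d ^ 2 / (c * t))) /
          μ (ball x (Real.sqrt t)))
        ≤ ∫⁻ t in Ioc (0:ℝ) T,
            ENNReal.ofReal ((A * (n:ℝ)^n * c^n * d^(η - 2*(n:ℝ))) * t^(p-1)) / V :=
          setLIntegral_mono' measurableSet_Ioc step1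
    _ = (∫⁻ t in Ioc (0:ℝ) T,
          ENNReal.ofReal ((A * (n:ℝ)^n * c^n * d^(η - 2*(n:ℝ))) * t^(p-1))) * V⁻¹ := by
        simp_rw [div_eq_mul_inv]
        exact lintegral_mul_const' _ _ hVinv
    _ = ENNReal.ofReal ((A * (n:ℝ)^n * c^n / p) * d ^ s) * V⁻¹ := by
        rw [← ofReal_integral_eq_lintegral_ofReal hint hnn, hval]
    _ = ENNReal.ofReal ((A * (n:ℝ)^n * c^n / p) * d ^ s) / V :=
        (div_eq_mul_inv _ _).symm
  -- bound piece 2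
  have bound2 : (∫⁻ t in Ioi T,
      ENNReal.ofReal (t ^ (s / 2 - 1) * Real.exp (-d ^ 2 / (c * t))) /
        μ (ball x (Real.sqrt t))) ≤
      ENNReal.ofReal ((1 / (a * q)) * d ^ s) / V := by
    have hint : IntegrableOn (fun t : ℝ => (a⁻¹ * d^ν) * t^(-q-1)) (Ioi T) :=
      (integrableOn_Ioi_rpow_of_lt (by linarith) hT).const_mul _
    have hnn : 0 ≤ᵐ[volume.restrict (Ioi T)]
        fun t : ℝ => (a⁻¹ * d^ν) * t^(-q-1) := by
      filter_upwards [ae_restrict_mem measurableSet_Ioi] with t ht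
      have ht0 : 0 < t := lt_trans hT ht
      have : 0 < d ^ ν := Real.rpow_pos_of_pos hd _
      exact mul_nonneg (by positivity) (Real.rpow_nonneg ht0.le _)
    have hval : (∫ t in Ioi T, (a⁻¹ * d^ν) * t^(-q-1)) = (1 / (a * q)) * d ^ s := by
      rw [integral_const_mul, integral_Ioi_rpow_of_lt (by linarith) hT]
      rw [show -q - 1 + 1 = -q by ring]
      have hTq : T ^ (-q) = d ^ (s - ν) := by
        rw [hT_def, ← Real.rpow_natCast d 2, ← Real.rpow_mul hd.le]
        congr 1
        rw [hq_def]; push_cast; ring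
      rw [hTq]
      have h3 : d ^ ν * d ^ (s - ν) = d ^ s := by
        rw [← Real.rpow_add hd]; congr 1; ring
      calc a⁻¹ * d^ν * (-(d ^ (s - ν)) / -q)
          = a⁻¹ * (d ^ ν * d ^ (s - ν)) / q := by
            rw [neg_div_neg_eq]; ring
      _ = (1 / (a * q)) * d ^ s := by rw [h3]; field_simp
    calc (∫⁻ t in Ioi T,
        ENNReal.ofReal (t ^ (s / 2 - 1) * Real.exp (-d ^ 2 / (c * t))) /
          μ (ball x (Real.sqrt t)))
        ≤ ∫⁻ t in Ioi T, ENNReal.ofReal ((a⁻¹ * d^ν) * t^(-q-1)) / V :=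
          setLIntegral_mono' measurableSet_Ioi step2
    _ = (∫⁻ t in Ioi T, ENNReal.ofReal ((a⁻¹ * d^ν) * t^(-q-1))) * V⁻¹ := by
        simp_rw [div_eq_mul_inv]
        exact lintegral_mul_const' _ _ hVinv
    _ = ENNReal.ofReal ((1 / (a * q)) * d ^ s) * V⁻¹ := by
        rw [← ofReal_integral_eq_lintegral_ofReal hint hnn, hval]
    _ = ENNReal.ofReal ((1 / (a * q)) * d ^ s) / V := (div_eq_mul_inv _ _).symm
  calc _ ≤ ENNReal.ofReal ((A * (n:ℝ)^n * c^n / p) * d ^ s) / V +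
        ENNReal.ofReal ((1 / (a * q)) * d ^ s) / V := add_le_add bound1 bound2
  _ = ENNReal.ofReal ((A * (n:ℝ)^n * c^n / p + 1 / (a * q)) * d ^ s) / V := by
      rw [ENNReal.div_add_div_same, ← ENNReal.ofReal_add
        (by positivity) (by positivity)]
      ring_nf
end

section
/- Let (M,g,mu) be a weighted Riemannian manifold satisfying the relative Faber-Krahn inequality and the reverse doubling property of order nu > 2 (with the doubling of order eta implied by Faber-Krahn). Fix o in M and p with 1 < p < nu/2. Then there is a constant K_p, depending only on p and the doubling and reverse doubling constants, such that for all x in M and r > 0: r^2 * ( (1/mu(B(x,r))) * integral over B(x,r) of d(o,y)^{-2p} dmu(y) )^{1/p} <= K_p. In particular the Morrey norm N_p of the potential V(y) = d(o,y)^{-2} is finite. -/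
open MeasureTheory Metric Set ENNReal NNReal

lemma setLIntegral_le_of_forall_le {X : Type*} [MeasurableSpace X] (μ : Measure X) (s : Set X)
    (f : X → ℝ≥0∞) (c : ℝ≥0∞) (h : ∀ y ∈ s, f y ≤ c) :
    ∫⁻ y in s, f y ∂μ ≤ c * μ s := by
  rw [← iSup_lintegral_measurable_le_eq_lintegral]
  refine iSup₂_le fun g hg => iSup_le fun hgf => ?_
  have hae : ∀ᵐ y ∂μ.restrict s, g y ≤ c := by
    rw [Filter.eventually_iff, mem_ae_iff]
    have hm : MeasurableSet {y | g y ≤ c}ᶜ := (hg measurableSet_Iic).compl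
    rw [Measure.restrict_apply hm]
    have he : {y | g y ≤ c}ᶜ ∩ s = ∅ := by
      ext y
      simp only [mem_inter_iff, mem_compl_iff, mem_setOf_eq, mem_empty_iff_false, iff_false,
        not_and]
      exact fun hgc hys => absurd ((hgf y).trans (h y hys)) hgc
    rw [he, measure_empty]
  calc ∫⁻ y in s, g y ∂μ ≤ ∫⁻ _ in s, c ∂μ := lintegral_mono_ae hae
    _ = c * μ s := by rw [setLIntegral_const]

theorem stmt16 {X : Type*} [MetricSpace X] [MeasurableSpace X] (μ : Measure X)
    (hpos : ∀ (x : X) (r : ℝ), 0 < r → 0 < μ (ball x r))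
    (hfin : ∀ (x : X) (r : ℝ), μ (ball x r) < ⊤)
    (A η a ν : ℝ) (hA : 1 < A) (ha : 0 < a) (hν : 2 < ν)
    (hdoub : ∀ (x : X) (r r' : ℝ), 0 < r → r ≤ r' →
      (μ (ball x r')).toReal ≤ A * (r' / r) ^ η * (μ (ball x r)).toReal)
    (hrd : ∀ (x : X) (r r' : ℝ), 0 < r → r ≤ r' →
      a * (r' / r) ^ ν ≤ (μ (ball x r')).toReal / (μ (ball x r)).toReal)
    (o : X) (p : ℝ) (hp : 1 < p) (hpν : p < ν / 2) :
    ∃ K > (0:ℝ), ∀ (x : X) (r : ℝ), 0 < r →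
      (∫⁻ y in ball x r, ENNReal.ofReal (dist o y ^ (-(2 * p))) ∂μ) / μ (ball x r) ≤
        ENNReal.ofReal ((K / r ^ 2) ^ p) := by
  have hp0 : (0:ℝ) < p := lt_trans one_pos hp
  have hq : 2 * p < ν := by linarith
  have hqpos : (0:ℝ) < 2 * p := by linarith
  have hqneg : -(2 * p) ≠ 0 := ne_of_lt (by linarith)
  have h2 : (0:ℝ) ≤ 2 := by norm_num
  set t : ℝ := (2:ℝ) ^ (2 * p - ν) with ht_def
  have ht0 : 0 < t := Real.rpow_pos_of_pos two_pos _
  have ht1 : t < 1 := Real.rpow_lt_one_of_one_lt_of_neg one_lt_two (by linarith)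
  set C : ℝ := (2:ℝ) ^ (2 * p) * a⁻¹ * (1 - t)⁻¹ with hC_def
  have hC0 : 0 < C := by
    apply mul_pos (mul_pos (Real.rpow_pos_of_pos two_pos _) (inv_pos.mpr ha))
    exact inv_pos.mpr (by linarith)
  set K0 : ℝ := C * A * 5 ^ η + 1 with hK0_def
  have hK01 : 1 ≤ K0 := by
    have : 0 < C * A * (5:ℝ) ^ η :=
      mul_pos (mul_pos hC0 (by linarith)) (Real.rpow_pos_of_pos (by norm_num) _)
    linarith
  have hK00 : 0 < K0 := by linarith
  refine ⟨K0 ^ p⁻¹, Real.rpow_pos_of_pos hK00 _, ?_⟩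
  have hKp : (K0 ^ p⁻¹) ^ p = K0 := by
    rw [← Real.rpow_mul hK00.le, inv_mul_cancel₀ (ne_of_gt hp0), Real.rpow_one]
  set f : X → ℝ≥0∞ := fun y => ENNReal.ofReal (dist o y ^ (-(2 * p))) with hf_def
  -- main lemma: integral over balls centered at o
  have main : ∀ R : ℝ, 0 < R →
      (∫⁻ y in ball o R, f y ∂μ) ≤
        ENNReal.ofReal (C * R ^ (-(2 * p))) * μ (ball o R) := by
    intro R hR
    set S : ℕ → Set X := fun j => {y | R / 2 ^ (j+1) ≤ dist o y} ∩ ball o (R / 2 ^ j) with hS_def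
    have cover : ball o R ⊆ {o} ∪ ⋃ j, S j := by
      intro y hy
      rcases eq_or_lt_of_le (dist_nonneg : 0 ≤ dist o y) with hd0 | hd0
      · left
        have : o = y := by rw [← dist_eq_zero]; exact hd0.symm
        simp [← this]
      · right
        have hex : ∃ n : ℕ, R / 2 ^ (n+1) ≤ dist o y := by
          obtain ⟨n, hn⟩ := pow_unbounded_of_one_lt (R / dist o y) (one_lt_two (α := ℝ))
          refine ⟨n, ?_⟩
          rw [div_lt_iff₀ hd0] at hn
          have h1 : R / 2 ^ (n+1) < dist o y := by
            rw [div_lt_iff₀ (by positivity)]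
            have : (2:ℝ) ^ n ≤ 2 ^ (n+1) := by
              apply pow_le_pow_right₀ (by norm_num); omega
            nlinarith [hd0]
          linarith
        refine mem_iUnion.mpr ⟨Nat.find hex, Nat.find_spec hex, ?_⟩
        rw [mem_ball, dist_comm]
        rcases Nat.eq_zero_or_pos (Nat.find hex) with h0 | hjpos
        · rw [h0]
          simpa using (mem_ball'.mp hy)
        · have hmin := Nat.find_min hex (Nat.sub_lt hjpos one_pos)
          push_neg at hmin
          have heq : Nat.find hex - 1 + 1 = Nat.find hex := Nat.succ_pred_eq_of_pos hjpos
          rwa [heq] at hmin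
    have hsing : (∫⁻ y in ({o} : Set X), f y ∂μ) = 0 := by
      refine le_antisymm ?_ zero_le
      have h := setLIntegral_le_of_forall_le μ {o} f 0 ?_
      · simpa using h
      · intro y hy
        rw [mem_singleton_iff] at hy
        simp [hf_def, hy, dist_self, Real.zero_rpow hqneg]
    have hball_bound : ∀ j : ℕ, μ (ball o (R / 2 ^ j)) ≤
        ENNReal.ofReal (a⁻¹ * ((2:ℝ) ^ j) ^ (-ν)) * μ (ball o R) := by
      intro j
      have h2j : (0:ℝ) < 2 ^ j := by positivity
      have hrj : 0 < R / 2 ^ j := by positivity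
      have hle : R / 2 ^ j ≤ R := div_le_self hR.le (one_le_pow₀ one_le_two)
      have h := hrd o (R / 2 ^ j) R hrj hle
      have hq2 : R / (R / 2 ^ j) = 2 ^ j := by
        field_simp
      rw [hq2] at h
      set mr := (μ (ball o (R / 2 ^ j))).toReal with hmr_def
      set mR := (μ (ball o R)).toReal with hmR_def
      have hmr0 : 0 < mr := ENNReal.toReal_pos (hpos o _ hrj).ne' (hfin o _).ne
      have hB : (0:ℝ) < ((2:ℝ) ^ j) ^ ν := Real.rpow_pos_of_pos h2j _
      have h' : a * ((2:ℝ) ^ j) ^ ν * mr ≤ mR := (le_div_iff₀ hmr0).mp h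
      have hreal : mr ≤ a⁻¹ * ((2:ℝ) ^ j) ^ (-ν) * mR := by
        rw [Real.rpow_neg h2j.le]
        have hmr : mr ≤ mR / (a * ((2:ℝ) ^ j) ^ ν) := by
          rw [le_div_iff₀ (mul_pos ha hB), mul_comm]
          exact h'
        have heq2 : mR / (a * ((2:ℝ) ^ j) ^ ν) = a⁻¹ * (((2:ℝ) ^ j) ^ ν)⁻¹ * mR := by
          field_simp
        linarith [heq2 ▸ hmr]
      calc μ (ball o (R / 2 ^ j)) = ENNReal.ofReal mr := (ENNReal.ofReal_toReal (hfin o _).ne).symm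
        _ ≤ ENNReal.ofReal (a⁻¹ * ((2:ℝ) ^ j) ^ (-ν) * mR) := ENNReal.ofReal_le_ofReal hreal
        _ = _ := by
            rw [ENNReal.ofReal_mul (by positivity), hmR_def, ENNReal.ofReal_toReal (hfin o _).ne]
    have ht2 : t = (2:ℝ) ^ (2*p) * (2:ℝ) ^ (-ν) := by
      rw [ht_def, sub_eq_add_neg, Real.rpow_add two_pos]
    have hstep : ∀ x : ℝ, 0 < x → (x/2) ^ (-(2*p)) = x ^ (-(2*p)) * (2:ℝ) ^ (2*p) := by
      intro x hx
      rw [Real.div_rpow hx.le h2, Real.rpow_neg h2, div_eq_mul_inv, inv_inv]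
    have key : ∀ j : ℕ, (R / 2 ^ (j+1)) ^ (-(2*p)) * (a⁻¹ * ((2:ℝ) ^ j) ^ (-ν)) =
        ((2:ℝ) ^ (2*p) * a⁻¹ * R ^ (-(2*p))) * t ^ j := by
      intro j
      induction j with
      | zero =>
        have e1 : R / 2 ^ (0+1) = R / 2 := by norm_num
        rw [e1, hstep R hR, pow_zero, Real.one_rpow, pow_zero]
        ring
      | succ k ih =>
        have e1 : R / 2 ^ (k+1+1) = (R / 2 ^ (k+1)) / 2 := by
          rw [pow_succ]; ring
        have e2 : ((2:ℝ) ^ (k+1)) ^ (-ν) = ((2:ℝ) ^ k) ^ (-ν) * (2:ℝ) ^ (-ν) := by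
          rw [pow_succ, Real.mul_rpow (by positivity) h2]
        rw [ht2] at ih
        rw [e1, hstep _ (by positivity), e2, pow_succ t, ht2]
        linear_combination ((2:ℝ) ^ (2*p) * (2:ℝ) ^ (-ν)) * ih
    have fbound : ∀ j : ℕ, ∀ y ∈ S j, f y ≤ ENNReal.ofReal ((R / 2 ^ (j+1)) ^ (-(2*p))) := by
      intro j y hy
      have hL : (0:ℝ) < R / 2 ^ (j+1) := by positivity
      exact ENNReal.ofReal_le_ofReal
        (Real.rpow_le_rpow_of_nonpos hL hy.1 (by linarith))
    have term : ∀ j : ℕ, (∫⁻ y in S j, f y ∂μ) ≤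
        ENNReal.ofReal (((2:ℝ) ^ (2*p) * a⁻¹ * R ^ (-(2*p))) * t ^ j) * μ (ball o R) := by
      intro j
      calc ∫⁻ y in S j, f y ∂μ
          ≤ ENNReal.ofReal ((R / 2 ^ (j+1)) ^ (-(2*p))) * μ (S j) :=
            setLIntegral_le_of_forall_le μ _ f _ (fbound j)
        _ ≤ ENNReal.ofReal ((R / 2 ^ (j+1)) ^ (-(2*p))) *
              (ENNReal.ofReal (a⁻¹ * ((2:ℝ) ^ j) ^ (-ν)) * μ (ball o R)) := by
            gcongr
            exact (measure_mono inter_subset_right).trans (hball_bound j)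
        _ = ENNReal.ofReal ((R / 2 ^ (j+1)) ^ (-(2*p)) * (a⁻¹ * ((2:ℝ) ^ j) ^ (-ν))) *
              μ (ball o R) := by
            rw [← mul_assoc, ← ENNReal.ofReal_mul (by positivity)]
        _ = _ := by rw [key j]
    have split : (∫⁻ y in ball o R, f y ∂μ) ≤
        (∫⁻ y in ({o} : Set X), f y ∂μ) + ∑' j, ∫⁻ y in S j, f y ∂μ := by
      calc ∫⁻ y in ball o R, f y ∂μ
          ≤ ∫⁻ y in (({o} : Set X) ∪ ⋃ j, S j), f y ∂μ :=
            lintegral_mono' (Measure.restrict_mono cover le_rfl) le_rfl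
        _ ≤ ∫⁻ y, f y ∂(μ.restrict {o} + μ.restrict (⋃ j, S j)) :=
            lintegral_mono' (Measure.restrict_union_le _ _) le_rfl
        _ = (∫⁻ y in ({o} : Set X), f y ∂μ) + ∫⁻ y in (⋃ j, S j), f y ∂μ :=
            lintegral_add_measure _ _ _
        _ ≤ _ := by
            gcongr
            calc ∫⁻ y in (⋃ j, S j), f y ∂μ
                ≤ ∫⁻ y, f y ∂(Measure.sum fun j => μ.restrict (S j)) :=
                  lintegral_mono' Measure.restrict_iUnion_le le_rfl
              _ = ∑' j, ∫⁻ y in S j, f y ∂μ := lintegral_sum_measure _ _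
    have geom : ∑' j : ℕ, ENNReal.ofReal (((2:ℝ) ^ (2*p) * a⁻¹ * R ^ (-(2*p))) * t ^ j) *
        μ (ball o R) = ENNReal.ofReal (C * R ^ (-(2 * p))) * μ (ball o R) := by
      have e1 : ∀ j : ℕ, ENNReal.ofReal (((2:ℝ) ^ (2*p) * a⁻¹ * R ^ (-(2*p))) * t ^ j) =
          ENNReal.ofReal ((2:ℝ) ^ (2*p) * a⁻¹ * R ^ (-(2*p))) * ENNReal.ofReal t ^ j := by
        intro j
        rw [ENNReal.ofReal_mul (by positivity), ENNReal.ofReal_pow ht0.le]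
      simp only [e1]
      rw [ENNReal.tsum_mul_right, ENNReal.tsum_mul_left, ENNReal.tsum_geometric]
      congr 1
      rw [← ENNReal.ofReal_one, ← ENNReal.ofReal_sub _ ht0.le, ← ENNReal.ofReal_inv_of_pos
        (by linarith), ← ENNReal.ofReal_mul (by positivity), hC_def]
      congr 1
      ring
    calc (∫⁻ y in ball o R, f y ∂μ) ≤ _ := split
      _ = ∑' j, ∫⁻ y in S j, f y ∂μ := by rw [hsing, zero_add]
      _ ≤ ∑' j : ℕ, ENNReal.ofReal (((2:ℝ) ^ (2*p) * a⁻¹ * R ^ (-(2*p))) * t ^ j) *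
            μ (ball o R) := ENNReal.tsum_le_tsum term
      _ = _ := geom
  -- now the main argument
  intro x r hr
  have hμ0 : μ (ball x r) ≠ 0 := (hpos x r hr).ne'
  have hμt : μ (ball x r) ≠ ⊤ := (hfin x r).ne
  have hKrw : ((K0 ^ p⁻¹ / r ^ 2) ^ p) = K0 * r ^ (-(2*p)) := by
    have hr2 : (r:ℝ) ^ (2:ℕ) = r ^ ((2:ℝ)) := by
      rw [← Real.rpow_natCast r 2]; norm_num
    rw [Real.div_rpow (Real.rpow_pos_of_pos hK00 _).le (by positivity), hKp, hr2,
      ← Real.rpow_mul hr.le, Real.rpow_neg hr.le, div_eq_mul_inv]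
  refine ENNReal.div_le_of_le_mul ?_
  rw [hKrw]
  rcases le_or_gt (2 * r) (dist o x) with hfar | hnear
  · -- far case
    have hb : ∀ y ∈ ball x r, f y ≤ ENNReal.ofReal (r ^ (-(2*p))) := by
      intro y hy
      have hxy := mem_ball.mp hy
      have h3 := dist_triangle o y x
      have h1 : r ≤ dist o y := by linarith
      exact ENNReal.ofReal_le_ofReal (Real.rpow_le_rpow_of_nonpos hr h1 (by linarith))
    calc (∫⁻ y in ball x r, f y ∂μ) ≤ ENNReal.ofReal (r ^ (-(2*p))) * μ (ball x r) :=
        setLIntegral_le_of_forall_le μ _ f _ hb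
      _ ≤ ENNReal.ofReal (K0 * r ^ (-(2*p))) * μ (ball x r) := by
        refine mul_le_mul_left (ENNReal.ofReal_le_ofReal ?_) _
        nlinarith [Real.rpow_pos_of_pos hr (-(2*p))]
  · -- near case
    have hsub : ball x r ⊆ ball o (3*r) := by
      intro y hy
      rw [mem_ball] at hy ⊢
      have h3 := dist_triangle y x o
      have hox : dist x o < 2 * r := by rw [dist_comm]; exact hnear
      linarith
    have hsub2 : ball o (3*r) ⊆ ball x (5*r) := by
      intro y hy
      rw [mem_ball] at hy ⊢
      have h3 := dist_triangle y o x
      linarith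
    have hdoub' : μ (ball x (5*r)) ≤ ENNReal.ofReal (A * 5 ^ η) * μ (ball x r) := by
      have h := hdoub x r (5*r) hr (by linarith)
      have he : 5 * r / r = 5 := by field_simp
      rw [he] at h
      calc μ (ball x (5*r)) = ENNReal.ofReal (μ (ball x (5*r))).toReal :=
          (ENNReal.ofReal_toReal (hfin x _).ne).symm
        _ ≤ ENNReal.ofReal (A * 5 ^ η * (μ (ball x r)).toReal) := ENNReal.ofReal_le_ofReal h
        _ = _ := by
          rw [ENNReal.ofReal_mul (by positivity), ENNReal.ofReal_toReal hμt]
    calc (∫⁻ y in ball x r, f y ∂μ)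
        ≤ ∫⁻ y in ball o (3*r), f y ∂μ :=
          lintegral_mono' (Measure.restrict_mono hsub le_rfl) le_rfl
      _ ≤ ENNReal.ofReal (C * (3*r) ^ (-(2*p))) * μ (ball o (3*r)) := main _ (by linarith)
      _ ≤ ENNReal.ofReal (C * (3*r) ^ (-(2*p))) * (ENNReal.ofReal (A * 5 ^ η) * μ (ball x r)) := by
          gcongr
          exact (measure_mono hsub2).trans hdoub'
      _ = ENNReal.ofReal (C * (3*r) ^ (-(2*p)) * (A * 5 ^ η)) * μ (ball x r) := by
          rw [← mul_assoc, ← ENNReal.ofReal_mul (by positivity)]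
      _ ≤ ENNReal.ofReal (K0 * r ^ (-(2*p))) * μ (ball x r) := by
          refine mul_le_mul_left (ENNReal.ofReal_le_ofReal ?_) _
          have h3 : (3*r) ^ (-(2*p)) ≤ r ^ (-(2*p)) :=
            Real.rpow_le_rpow_of_nonpos hr (by linarith) (by linarith)
          have hrp : (0:ℝ) < r ^ (-(2*p)) := Real.rpow_pos_of_pos hr _
          have h5 : (0:ℝ) < (5:ℝ) ^ η := Real.rpow_pos_of_pos (by norm_num) _
          have hCA : (0:ℝ) ≤ C * (A * 5 ^ η) :=
            mul_nonneg hC0.le (mul_nonneg (by linarith) h5.le)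
          have h4 := mul_le_mul_of_nonneg_left h3 hCA
          calc C * (3*r) ^ (-(2*p)) * (A * 5 ^ η)
              = C * (A * 5 ^ η) * ((3*r) ^ (-(2*p))) := by ring
            _ ≤ C * (A * 5 ^ η) * (r ^ (-(2*p))) := h4
            _ = (C * A * 5 ^ η) * r ^ (-(2*p)) := by ring
            _ ≤ K0 * r ^ (-(2*p)) := by nlinarith [hrp]
end
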